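/- Let N ≥ 1, let Ω ⊆ ℝ^N be a nonempty open set, and let f : Ω → ℂ be measurable with ∫_{Ω_1} |f(x)|² dx + ∫_{Ω∖Ω_1} |f(x)|² |x|^{N+1} dx < ∞ and ∫_Ω |f(x)| |x|^{N+1} dx < ∞ (i.e. f belongs to the space Y₀). Then lim_{n→∞} ‖f‖_{Y_n} = ∫_Ω |f(x)| dx = ‖f‖_{L¹(Ω)}. -/

import Mathlib

open MeasureTheory
open scoped ENNReal NNReal Topology
open Filter


lemma auxY_tendsto_rpow {B : ℕ → ℝ≥0∞} {e : ℕ → ℝ} {L : ℝ≥0∞} (hL : L ≠ ∞)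
    (hBfin : ∀ n, B n ≠ ∞)
    (hB : Tendsto B atTop (𝓝 L)) (he : Tendsto e atTop (𝓝 1)) :
    Tendsto (fun n => B n ^ e n) atTop (𝓝 L) := by
  have h1 : Tendsto (fun n => (B n).toNNReal) atTop (𝓝 L.toNNReal) :=
    (ENNReal.tendsto_toNNReal hL).comp hB
  have h2 : Tendsto (fun n => ((B n).toNNReal) ^ (e n)) atTop (𝓝 (L.toNNReal ^ (1 : ℝ))) :=
    h1.nnrpow he (Or.inr one_pos)
  have h3 : Tendsto (fun n => (((B n).toNNReal ^ (e n) : ℝ≥0) : ℝ≥0∞)) atTop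
      (𝓝 ((L.toNNReal ^ (1 : ℝ) : ℝ≥0) : ℝ≥0∞)) := ENNReal.tendsto_coe.mpr h2
  rw [NNReal.rpow_one, ENNReal.coe_toNNReal hL] at h3
  refine h3.congr' ?_
  filter_upwards [he.eventually (eventually_gt_nhds (show (0:ℝ) < 1 by norm_num))] with n hn
  rw [ENNReal.coe_rpow_of_nonneg _ hn.le, ENNReal.coe_toNNReal (hBfin n)]

lemma auxY_tendsto_prefactor {c : ℝ≥0∞} (hc0 : c ≠ 0) (hc : c ≠ ∞) (N : ℕ) :
    Tendsto (fun n : ℕ => (c * (n : ℝ≥0∞) ^ N) ^ ((1 : ℝ) / ((n : ℝ) + 1))) atTop (𝓝 1) := by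
  lift c to ℝ≥0 using hc
  have hc0' : c ≠ 0 := by simpa using hc0
  have hc0'' : (0 : ℝ) < (c : ℝ) := by positivity
  have hreal : Tendsto (fun n : ℕ => ((c : ℝ) * (n : ℝ) ^ N) ^ ((1 : ℝ) / ((n : ℝ) + 1)))
      atTop (𝓝 1) := by
    have h1 : Tendsto (fun n : ℕ => Real.log (c : ℝ) / ((n : ℝ) + 1)) atTop (𝓝 0) := by
      have h2 : Tendsto (fun n : ℕ => ((n : ℝ) + 1)) atTop atTop :=
        tendsto_atTop_add_const_right _ 1 tendsto_natCast_atTop_atTop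
      exact Tendsto.div_atTop tendsto_const_nhds h2
    have h2 : Tendsto (fun n : ℕ => (N : ℝ) * (Real.log (n : ℝ) / ((n : ℝ) + 1))) atTop
        (𝓝 ((N : ℝ) * 0)) := by
      refine Tendsto.const_mul _ ?_
      have h3 := Real.tendsto_pow_log_div_mul_add_atTop 1 1 1 one_ne_zero
      have h4 := h3.comp tendsto_natCast_atTop_atTop (α := ℕ)
      simpa [Function.comp_def, pow_one] using h4
    have hlog : Tendsto (fun n : ℕ =>
        (Real.log (c : ℝ) + (N : ℝ) * Real.log (n : ℝ)) * ((1 : ℝ) / ((n : ℝ) + 1)))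
        atTop (𝓝 0) := by
      have h := h1.add h2
      rw [mul_zero, add_zero] at h
      exact h.congr fun n => by ring
    have hexp : Tendsto (fun n : ℕ =>
        Real.exp ((Real.log (c : ℝ) + (N : ℝ) * Real.log (n : ℝ)) * ((1 : ℝ) / ((n : ℝ) + 1))))
        atTop (𝓝 1) := by
      have := (Real.continuous_exp.tendsto 0).comp hlog
      simpa [Function.comp_def] using this
    refine hexp.congr' ?_
    filter_upwards [eventually_ge_atTop 1] with n hn
    have hn' : (0 : ℝ) < (n : ℝ) := by exact_mod_cast hn
    have hpos : (0 : ℝ) < (c : ℝ) * (n : ℝ) ^ N := by positivity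
    rw [Real.rpow_def_of_pos hpos, Real.log_mul (ne_of_gt hc0'') (by positivity), Real.log_pow]
  have hnn : Tendsto (fun n : ℕ => ((c : ℝ≥0) * (n : ℝ≥0) ^ N) ^ ((1 : ℝ) / ((n : ℝ) + 1)))
      atTop (𝓝 1) := by
    rw [← NNReal.tendsto_coe]
    refine hreal.congr fun n => ?_
    rw [NNReal.coe_rpow]
    congr 1
  have h5 := ENNReal.tendsto_coe.mpr hnn
  rw [show ((1 : ℝ≥0) : ℝ≥0∞) = 1 from rfl] at h5
  refine h5.congr fun n => ?_
  rw [ENNReal.coe_rpow_of_nonneg _ (by positivity : (0:ℝ) ≤ 1 / ((n : ℝ) + 1))]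
  congr 1


lemma auxY_one_le_b {E : Type*} [NormedAddCommGroup E] {x : E} (hx : 1 ≤ ‖x‖) :
    (1 : ℝ≥0∞) ≤ (‖x‖₊ : ℝ≥0∞) := by
  have : (1 : ℝ≥0) ≤ ‖x‖₊ := by rwa [← NNReal.coe_le_coe, coe_nnnorm, NNReal.coe_one]
  exact_mod_cast this



/-- The `Y_n`-norm of a measurable function `f : Ω → ℂ`, for `Ω ⊆ ℝ^N`:
`‖f‖_{Y_n} = (2 κ_N n^N)^{1/(n+1)} · ( ∫_{Ω_n} |f|^{1+εₙ} + ∫_{Ω∖Ω_n} |f|^{1+εₙ} |x|^{εₙ(N+εₙ)} )^{1/(1+εₙ)}`,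
where `εₙ = 1/n`, `Ω_n = {x ∈ Ω : |x| ≤ n}`, and `κ_N = N·vol(B(0,1))` is the surface
measure of the unit sphere of `ℝ^N`. The value `+∞` is allowed. -/
noncomputable def Ynorm (N : ℕ) (Ω : Set (EuclideanSpace ℝ (Fin N))) (n : ℕ)
    (f : EuclideanSpace ℝ (Fin N) → ℂ) : ℝ≥0∞ :=
  (2 * ((N : ℝ≥0∞) * volume (Metric.ball (0 : EuclideanSpace ℝ (Fin N)) 1)) * (n : ℝ≥0∞) ^ N)
      ^ ((1 : ℝ) / ((n : ℝ) + 1)) *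
    ((∫⁻ x in Ω ∩ {x | ‖x‖ ≤ (n : ℝ)}, (‖f x‖₊ : ℝ≥0∞) ^ (1 + 1 / (n : ℝ)) ∂volume)
        + ∫⁻ x in Ω \ {x | ‖x‖ ≤ (n : ℝ)},
            (‖f x‖₊ : ℝ≥0∞) ^ (1 + 1 / (n : ℝ))
              * (‖x‖₊ : ℝ≥0∞) ^ ((1 / (n : ℝ)) * ((N : ℝ) + 1 / (n : ℝ))) ∂volume)
      ^ ((1 : ℝ) / (1 + 1 / (n : ℝ)))


/-- Convergence of the `Y_n`-norms to the `L¹`-norm: if `f ∈ Y₀`, i.e.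
`∫_{Ω₁} |f|² + ∫_{Ω∖Ω₁} |f|² |x|^{N+1} < ∞` and `∫_Ω |f| |x|^{N+1} < ∞`, then
`‖f‖_{Y_n} → ‖f‖_{L¹(Ω)}` as `n → ∞`. -/
theorem Ynorm_tendsto_L1norm
    (N : ℕ) (hN : 1 ≤ N)
    (Ω : Set (EuclideanSpace ℝ (Fin N))) (hΩ : IsOpen Ω) (hΩne : Ω.Nonempty)
    (f : EuclideanSpace ℝ (Fin N) → ℂ) (hf : Measurable f)
    (hY1 : (∫⁻ x in Ω ∩ {x | ‖x‖ ≤ (1 : ℝ)}, (‖f x‖₊ : ℝ≥0∞) ^ (2 : ℝ) ∂volume)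
        + (∫⁻ x in Ω \ {x | ‖x‖ ≤ (1 : ℝ)},
            (‖f x‖₊ : ℝ≥0∞) ^ (2 : ℝ) * (‖x‖₊ : ℝ≥0∞) ^ ((N : ℝ) + 1) ∂volume) < ⊤)
    (hY0 : (∫⁻ x in Ω, (‖f x‖₊ : ℝ≥0∞) * (‖x‖₊ : ℝ≥0∞) ^ ((N : ℝ) + 1) ∂volume) < ⊤) :
    Filter.Tendsto (fun n : ℕ => Ynorm N Ω n f) Filter.atTop
      (nhds (∫⁻ x in Ω, (‖f x‖₊ : ℝ≥0∞) ∂volume)) := by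

  classical
  have mΩ : MeasurableSet Ω := hΩ.measurableSet
  have mS : ∀ r : ℝ, MeasurableSet {x : EuclideanSpace ℝ (Fin N) | ‖x‖ ≤ r} := fun r =>
    (isClosed_le continuous_norm continuous_const).measurableSet
  set L : ℝ≥0∞ := ∫⁻ x in Ω, (‖f x‖₊ : ℝ≥0∞) ∂volume with hLdef
  -- the weight
  set w : EuclideanSpace ℝ (Fin N) → ℝ≥0∞ := fun x =>
    if ‖x‖ ≤ (1 : ℝ) then 1 else (‖x‖₊ : ℝ≥0∞) ^ ((N : ℝ) + 1) with hwdef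
  have mw : Measurable w := Measurable.ite (mS 1) measurable_const
    ((ENNReal.continuous_rpow_const.comp
      (ENNReal.continuous_coe.comp continuous_nnnorm)).measurable)
  have hw1 : ∀ x : EuclideanSpace ℝ (Fin N), 1 ≤ w x := by
    intro x
    simp only [w]
    split_ifs with h
    · exact le_rfl
    · exact ENNReal.one_le_rpow (auxY_one_le_b (le_of_lt (not_le.mp h))) (by positivity)
  -- the dominating function
  set g : EuclideanSpace ℝ (Fin N) → ℝ≥0∞ := fun x =>
    (‖f x‖₊ : ℝ≥0∞) + (‖f x‖₊ : ℝ≥0∞) ^ (2 : ℝ) * w x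
      + (‖f x‖₊ : ℝ≥0∞) * (‖x‖₊ : ℝ≥0∞) ^ ((N : ℝ) + 1) with hgdef
  have m2 : Measurable fun x : EuclideanSpace ℝ (Fin N) => (‖f x‖₊ : ℝ≥0∞) ^ (2 : ℝ) * w x :=
    ((ENNReal.continuous_rpow_const.measurable).comp hf.nnnorm.coe_nnreal_ennreal).mul mw
  have m3 : Measurable fun x : EuclideanSpace ℝ (Fin N) => (‖f x‖₊ : ℝ≥0∞) * (‖x‖₊ : ℝ≥0∞) ^ ((N : ℝ) + 1) :=
    hf.nnnorm.coe_nnreal_ennreal.mul ((ENNReal.continuous_rpow_const.comp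
      (ENNReal.continuous_coe.comp continuous_nnnorm)).measurable)
  -- the sequence of integrands
  set F : ℕ → EuclideanSpace ℝ (Fin N) → ℝ≥0∞ := fun n x =>
    (‖f x‖₊ : ℝ≥0∞) ^ (1 + 1 / (n : ℝ)) *
      (if ‖x‖ ≤ (n : ℝ) then 1
        else (‖x‖₊ : ℝ≥0∞) ^ ((1 / (n : ℝ)) * ((N : ℝ) + 1 / (n : ℝ)))) with hFdef
  have mF : ∀ n : ℕ, Measurable (F n) := by
    intro n
    exact ((ENNReal.continuous_rpow_const.measurable).comp hf.nnnorm.coe_nnreal_ennreal).mul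
      (Measurable.ite (mS n) measurable_const
        ((ENNReal.continuous_rpow_const.comp
          (ENNReal.continuous_coe.comp continuous_nnnorm)).measurable))
  -- domination
  have hdom : ∀ n : ℕ, 1 ≤ n → ∀ x : EuclideanSpace ℝ (Fin N), F n x ≤ g x := by
    intro n hn x
    have hn' : (1 : ℝ) ≤ (n : ℝ) := by exact_mod_cast hn
    have hn0 : (0 : ℝ) < (n : ℝ) := lt_of_lt_of_le one_pos hn'
    have hinv : 1 / (n : ℝ) ≤ 1 := by rw [div_le_one hn0]; exact hn'
    have hinv0 : (0 : ℝ) ≤ 1 / (n : ℝ) := by positivity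
    have hp1 : (1 : ℝ) ≤ 1 + 1 / (n : ℝ) := by linarith
    have hp2 : 1 + 1 / (n : ℝ) ≤ 2 := by linarith
    set A : ℝ≥0∞ := (‖f x‖₊ : ℝ≥0∞) with hA
    have hA2 : A ^ (1 + 1 / (n : ℝ)) ≤ A + A ^ (2 : ℝ) * w x := by
      rcases le_total A 1 with h | h
      · calc A ^ (1 + 1 / (n : ℝ)) ≤ A ^ (1 : ℝ) :=
              ENNReal.rpow_le_rpow_of_exponent_ge h hp1
          _ = A := ENNReal.rpow_one _
          _ ≤ A + A ^ (2 : ℝ) * w x := self_le_add_right _ _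
      · calc A ^ (1 + 1 / (n : ℝ)) ≤ A ^ (2 : ℝ) :=
              ENNReal.rpow_le_rpow_of_exponent_le h hp2
          _ = A ^ (2 : ℝ) * 1 := (mul_one _).symm
          _ ≤ A ^ (2 : ℝ) * w x := mul_le_mul_right (hw1 x) _
          _ ≤ A + A ^ (2 : ℝ) * w x := le_add_self
    by_cases hx : ‖x‖ ≤ (n : ℝ)
    · have : F n x = A ^ (1 + 1 / (n : ℝ)) := by
        simp only [F, if_pos hx, mul_one, hA]
      rw [this]
      exact le_trans hA2 (self_le_add_right _ _)
    · have hx1 : (1 : ℝ) ≤ ‖x‖ := le_trans hn' (le_of_lt (not_le.mp hx))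
      have hb1 : (1 : ℝ≥0∞) ≤ (‖x‖₊ : ℝ≥0∞) := auxY_one_le_b hx1
      have hq : (1 / (n : ℝ)) * ((N : ℝ) + 1 / (n : ℝ)) ≤ (N : ℝ) + 1 := by
        have hNn : (1 / (n : ℝ)) * ((N : ℝ) + 1 / (n : ℝ)) ≤ 1 * ((N : ℝ) + 1) :=
          mul_le_mul hinv (by linarith) (by positivity) (by norm_num)
        linarith
      have hbq : (‖x‖₊ : ℝ≥0∞) ^ ((1 / (n : ℝ)) * ((N : ℝ) + 1 / (n : ℝ)))
          ≤ (‖x‖₊ : ℝ≥0∞) ^ ((N : ℝ) + 1) :=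
        ENNReal.rpow_le_rpow_of_exponent_le hb1 hq
      have hFx : F n x = A ^ (1 + 1 / (n : ℝ)) *
          (‖x‖₊ : ℝ≥0∞) ^ ((1 / (n : ℝ)) * ((N : ℝ) + 1 / (n : ℝ))) := by
        simp only [F, if_neg hx, hA]
      rw [hFx]
      rcases le_total A 1 with h | h
      · calc A ^ (1 + 1 / (n : ℝ)) * (‖x‖₊ : ℝ≥0∞) ^ ((1 / (n : ℝ)) * ((N : ℝ) + 1 / (n : ℝ)))
            ≤ A ^ (1 : ℝ) * (‖x‖₊ : ℝ≥0∞) ^ ((N : ℝ) + 1) :=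
              mul_le_mul' (ENNReal.rpow_le_rpow_of_exponent_ge h hp1) hbq
          _ = A * (‖x‖₊ : ℝ≥0∞) ^ ((N : ℝ) + 1) := by rw [ENNReal.rpow_one]
          _ ≤ g x := le_add_self
      · have hwx : w x = (‖x‖₊ : ℝ≥0∞) ^ ((N : ℝ) + 1) := by
          simp only [w]
          rw [if_neg (by linarith [not_le.mp hx] : ¬ ‖x‖ ≤ (1 : ℝ))]
        calc A ^ (1 + 1 / (n : ℝ)) * (‖x‖₊ : ℝ≥0∞) ^ ((1 / (n : ℝ)) * ((N : ℝ) + 1 / (n : ℝ)))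
            ≤ A ^ (2 : ℝ) * (‖x‖₊ : ℝ≥0∞) ^ ((N : ℝ) + 1) :=
              mul_le_mul' (ENNReal.rpow_le_rpow_of_exponent_le h hp2) hbq
          _ = A ^ (2 : ℝ) * w x := by rw [hwx]
          _ ≤ A + A ^ (2 : ℝ) * w x := le_add_self
          _ ≤ g x := self_le_add_right _ _
  -- pointwise convergence
  have hptw : ∀ x : EuclideanSpace ℝ (Fin N), Tendsto (fun n : ℕ => F (n + 1) x) atTop (𝓝 ((‖f x‖₊ : ℝ≥0∞))) := by
    intro x
    have hexp : Tendsto (fun n : ℕ => 1 + 1 / (((n + 1 : ℕ) : ℝ))) atTop (𝓝 1) := by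
      have h1 := tendsto_one_div_add_atTop_nhds_zero_nat (𝕜 := ℝ)
      have h2 := (tendsto_const_nhds : Tendsto (fun _ : ℕ => (1:ℝ)) atTop (𝓝 1)).add h1
      rw [add_zero] at h2
      refine h2.congr fun n => ?_
      push_cast
      ring
    have hcoe : Tendsto (fun n : ℕ => ((‖f x‖₊ ^ (1 + 1 / (((n + 1 : ℕ) : ℝ))) : ℝ≥0) : ℝ≥0∞))
        atTop (𝓝 ((‖f x‖₊ : ℝ≥0∞))) := by
      have := (tendsto_const_nhds : Tendsto (fun _ : ℕ => ‖f x‖₊) atTop (𝓝 ‖f x‖₊)).nnrpow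
        hexp (Or.inr one_pos)
      rw [NNReal.rpow_one] at this
      exact ENNReal.tendsto_coe.mpr this
    refine hcoe.congr' ?_
    obtain ⟨M, hM⟩ := exists_nat_ge ‖x‖
    filter_upwards [eventually_ge_atTop M] with n hn
    have hxn : ‖x‖ ≤ ((n + 1 : ℕ) : ℝ) := by
      refine le_trans hM ?_
      exact_mod_cast Nat.le_succ_of_le hn
    have hFx : F (n + 1) x = (‖f x‖₊ : ℝ≥0∞) ^ (1 + 1 / (((n + 1 : ℕ) : ℝ))) := by
      simp only [F, if_pos hxn, mul_one]
    rw [hFx, ENNReal.coe_rpow_of_nonneg _ (by positivity)]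
  -- L is finite
  have hY1a := (ENNReal.add_lt_top.mp hY1).1
  have hY1b := (ENNReal.add_lt_top.mp hY1).2
  have hLfin : L ≠ ∞ := by
    have hsplit : L = (∫⁻ x in Ω ∩ {x : EuclideanSpace ℝ (Fin N) | ‖x‖ ≤ (1 : ℝ)}, (‖f x‖₊ : ℝ≥0∞) ∂volume)
        + ∫⁻ x in Ω \ {x : EuclideanSpace ℝ (Fin N) | ‖x‖ ≤ (1 : ℝ)}, (‖f x‖₊ : ℝ≥0∞) ∂volume :=
      (lintegral_inter_add_diff _ Ω (mS 1)).symm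
    have h1 : (∫⁻ x in Ω ∩ {x : EuclideanSpace ℝ (Fin N) | ‖x‖ ≤ (1 : ℝ)}, (‖f x‖₊ : ℝ≥0∞) ∂volume)
        ≤ (∫⁻ x in Ω ∩ {x : EuclideanSpace ℝ (Fin N) | ‖x‖ ≤ (1 : ℝ)}, (‖f x‖₊ : ℝ≥0∞) ^ (2 : ℝ) ∂volume)
          + volume (Ω ∩ {x : EuclideanSpace ℝ (Fin N) | ‖x‖ ≤ (1 : ℝ)}) := by
      calc (∫⁻ x in Ω ∩ {x : EuclideanSpace ℝ (Fin N) | ‖x‖ ≤ (1 : ℝ)}, (‖f x‖₊ : ℝ≥0∞) ∂volume)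
          ≤ ∫⁻ x in Ω ∩ {x : EuclideanSpace ℝ (Fin N) | ‖x‖ ≤ (1 : ℝ)},
              ((‖f x‖₊ : ℝ≥0∞) ^ (2 : ℝ) + 1) ∂volume := by
            refine lintegral_mono fun x => ?_
            rcases le_total ((‖f x‖₊ : ℝ≥0∞)) 1 with h | h
            · exact le_trans h le_add_self
            · refine le_trans ?_ (self_le_add_right _ _)
              calc (‖f x‖₊ : ℝ≥0∞) = (‖f x‖₊ : ℝ≥0∞) ^ (1 : ℝ) := (ENNReal.rpow_one _).symm
                _ ≤ (‖f x‖₊ : ℝ≥0∞) ^ (2 : ℝ) :=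
                  ENNReal.rpow_le_rpow_of_exponent_le h (by norm_num)
        _ = (∫⁻ x in Ω ∩ {x : EuclideanSpace ℝ (Fin N) | ‖x‖ ≤ (1 : ℝ)}, (‖f x‖₊ : ℝ≥0∞) ^ (2 : ℝ) ∂volume)
            + volume (Ω ∩ {x : EuclideanSpace ℝ (Fin N) | ‖x‖ ≤ (1 : ℝ)}) := by
          rw [lintegral_add_right _ measurable_const, setLIntegral_one]
    have hvol : volume (Ω ∩ {x : EuclideanSpace ℝ (Fin N) | ‖x‖ ≤ (1 : ℝ)}) < ⊤ := by
      refine lt_of_le_of_lt (measure_mono fun x hx => ?_) (measure_closedBall_lt_top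
        (x := (0 : EuclideanSpace ℝ (Fin N))) (r := 1))
      exact Metric.mem_closedBall.mpr (by simpa [dist_zero_right] using hx.2)
    have h2 : (∫⁻ x in Ω \ {x : EuclideanSpace ℝ (Fin N) | ‖x‖ ≤ (1 : ℝ)}, (‖f x‖₊ : ℝ≥0∞) ∂volume)
        ≤ ∫⁻ x in Ω, (‖f x‖₊ : ℝ≥0∞) * (‖x‖₊ : ℝ≥0∞) ^ ((N : ℝ) + 1) ∂volume := by
      refine le_trans (setLIntegral_mono m3 fun x hx => ?_) (lintegral_mono_set Set.diff_subset)
      have hx1 : (1 : ℝ) ≤ ‖x‖ := le_of_lt (not_le.mp hx.2)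
      refine le_mul_of_one_le_right' (ENNReal.one_le_rpow (auxY_one_le_b hx1) (by positivity))
    rw [hsplit]
    exact ENNReal.add_ne_top.mpr ⟨(lt_of_le_of_lt h1
      (ENNReal.add_lt_top.mpr ⟨hY1a, hvol⟩)).ne, (lt_of_le_of_lt h2 hY0).ne⟩
  -- integral of the dominating function is finite
  have hI2 : (∫⁻ x in Ω, (‖f x‖₊ : ℝ≥0∞) ^ (2 : ℝ) * w x ∂volume)
      = (∫⁻ x in Ω ∩ {x : EuclideanSpace ℝ (Fin N) | ‖x‖ ≤ (1 : ℝ)}, (‖f x‖₊ : ℝ≥0∞) ^ (2 : ℝ) ∂volume)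
        + ∫⁻ x in Ω \ {x : EuclideanSpace ℝ (Fin N) | ‖x‖ ≤ (1 : ℝ)},
            (‖f x‖₊ : ℝ≥0∞) ^ (2 : ℝ) * (‖x‖₊ : ℝ≥0∞) ^ ((N : ℝ) + 1) ∂volume := by
    rw [← lintegral_inter_add_diff (fun x => (‖f x‖₊ : ℝ≥0∞) ^ (2 : ℝ) * w x) Ω (mS 1)]
    congr 1
    · refine setLIntegral_congr_fun (mΩ.inter (mS 1)) (fun x hx => ?_)
      have hx2 : ‖x‖ ≤ (1 : ℝ) := hx.2
      simp only [w]
      rw [if_pos hx2, mul_one]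
    · refine setLIntegral_congr_fun (mΩ.diff (mS 1)) (fun x hx => ?_)
      have hx2 : ¬ ‖x‖ ≤ (1 : ℝ) := hx.2
      simp only [w]
      rw [if_neg hx2]
  have hgfin : (∫⁻ x in Ω, g x ∂volume) ≠ ∞ := by
    have hsum : (∫⁻ x in Ω, g x ∂volume)
        = L + (∫⁻ x in Ω, (‖f x‖₊ : ℝ≥0∞) ^ (2 : ℝ) * w x ∂volume)
          + ∫⁻ x in Ω, (‖f x‖₊ : ℝ≥0∞) * (‖x‖₊ : ℝ≥0∞) ^ ((N : ℝ) + 1) ∂volume := by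
      simp only [g]
      rw [lintegral_add_right _ m3, lintegral_add_right _ m2]
    rw [hsum, hI2]
    exact ENNReal.add_ne_top.mpr ⟨ENNReal.add_ne_top.mpr ⟨hLfin,
      (ENNReal.add_lt_top.mpr ⟨hY1a, hY1b⟩).ne⟩, hY0.ne⟩
  -- the sum of the two integrals equals the integral of F n
  have Ieq : ∀ n : ℕ,
      ((∫⁻ x in Ω ∩ {x : EuclideanSpace ℝ (Fin N) | ‖x‖ ≤ (n : ℝ)}, (‖f x‖₊ : ℝ≥0∞) ^ (1 + 1 / (n : ℝ)) ∂volume)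
        + ∫⁻ x in Ω \ {x : EuclideanSpace ℝ (Fin N) | ‖x‖ ≤ (n : ℝ)},
            (‖f x‖₊ : ℝ≥0∞) ^ (1 + 1 / (n : ℝ))
              * (‖x‖₊ : ℝ≥0∞) ^ ((1 / (n : ℝ)) * ((N : ℝ) + 1 / (n : ℝ))) ∂volume)
      = ∫⁻ x in Ω, F n x ∂volume := by
    intro n
    rw [← lintegral_inter_add_diff (F n) Ω (mS n)]
    congr 1
    · refine setLIntegral_congr_fun (mΩ.inter (mS n)) (fun x hx => ?_)
      have hx2 : ‖x‖ ≤ ((n : ℕ) : ℝ) := hx.2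
      simp only [F]
      rw [if_pos hx2, mul_one]
    · refine setLIntegral_congr_fun (mΩ.diff (mS n)) (fun x hx => ?_)
      have hx2 : ¬ ‖x‖ ≤ ((n : ℕ) : ℝ) := hx.2
      simp only [F]
      rw [if_neg hx2]
  -- dominated convergence
  have hDCT : Tendsto (fun n : ℕ => ∫⁻ x in Ω, F (n + 1) x ∂volume) atTop (𝓝 L) :=
    tendsto_lintegral_of_dominated_convergence g (fun n => mF (n + 1))
      (fun n => ae_of_all _ fun x => hdom (n + 1) (Nat.le_add_left 1 n) x) hgfin
      (ae_of_all _ hptw)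
  have hIfin : ∀ n : ℕ, (∫⁻ x in Ω, F (n + 1) x ∂volume) ≠ ∞ := fun n =>
    ne_top_of_le_ne_top hgfin (lintegral_mono fun x => hdom (n + 1) (Nat.le_add_left 1 n) x)
  -- exponents
  have he : Tendsto (fun n : ℕ => (1 : ℝ) / (1 + 1 / (((n + 1 : ℕ)) : ℝ))) atTop (𝓝 1) := by
    have h1 := tendsto_one_div_add_atTop_nhds_zero_nat (𝕜 := ℝ)
    have h2 := (tendsto_const_nhds : Tendsto (fun _ : ℕ => (1:ℝ)) atTop (𝓝 1)).add h1
    rw [add_zero] at h2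
    have h3 : Tendsto (fun n : ℕ => (1 : ℝ) + 1 / (((n + 1 : ℕ)) : ℝ)) atTop (𝓝 1) := by
      refine h2.congr fun n => ?_
      push_cast
      ring
    have h4 := (tendsto_const_nhds : Tendsto (fun _ : ℕ => (1:ℝ)) atTop (𝓝 1)).div h3 one_ne_zero
    rw [div_one] at h4
    exact h4
  -- prefactor
  have hA : Tendsto (fun n : ℕ =>
      (2 * ((N : ℝ≥0∞) * volume (Metric.ball (0 : EuclideanSpace ℝ (Fin N)) 1)) * ((n + 1 : ℕ) : ℝ≥0∞) ^ N)
        ^ ((1 : ℝ) / ((((n + 1 : ℕ)) : ℝ) + 1))) atTop (𝓝 1) := by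
    have hc0 : (2 * ((N : ℝ≥0∞) * volume (Metric.ball (0 : EuclideanSpace ℝ (Fin N)) 1))) ≠ 0 := by
      refine mul_ne_zero two_ne_zero (mul_ne_zero ?_ ?_)
      · exact Nat.cast_ne_zero.mpr (by omega)
      · exact (Metric.measure_ball_pos volume (0 : EuclideanSpace ℝ (Fin N)) one_pos).ne'
    have hcT : (2 * ((N : ℝ≥0∞) * volume (Metric.ball (0 : EuclideanSpace ℝ (Fin N)) 1))) ≠ ∞ :=
      ENNReal.mul_ne_top (by norm_num)
        (ENNReal.mul_ne_top (ENNReal.natCast_ne_top N) measure_ball_lt_top.ne)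
    exact (tendsto_add_atTop_iff_nat 1).mpr (auxY_tendsto_prefactor hc0 hcT N)
  -- assemble
  rw [← Filter.tendsto_add_atTop_iff_nat 1]
  have hI : Tendsto (fun n : ℕ =>
      ((∫⁻ x in Ω ∩ {x : EuclideanSpace ℝ (Fin N) | ‖x‖ ≤ ((n + 1 : ℕ) : ℝ)},
          (‖f x‖₊ : ℝ≥0∞) ^ (1 + 1 / (((n + 1 : ℕ)) : ℝ)) ∂volume)
        + ∫⁻ x in Ω \ {x : EuclideanSpace ℝ (Fin N) | ‖x‖ ≤ ((n + 1 : ℕ) : ℝ)},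
            (‖f x‖₊ : ℝ≥0∞) ^ (1 + 1 / (((n + 1 : ℕ)) : ℝ))
              * (‖x‖₊ : ℝ≥0∞) ^ ((1 / (((n + 1 : ℕ)) : ℝ))
                  * ((N : ℝ) + 1 / (((n + 1 : ℕ)) : ℝ))) ∂volume)) atTop (𝓝 L) := by
    refine hDCT.congr fun n => (Ieq (n + 1)).symm
  have hIe := auxY_tendsto_rpow hLfin (fun n => by rw [Ieq (n + 1)]; exact hIfin n) hI he
  have hmul := ENNReal.Tendsto.mul hA (Or.inl one_ne_zero) hIe (Or.inr ENNReal.one_ne_top)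
  rw [one_mul] at hmul
  exact hmul
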